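/- arXiv:2005.01046 — 3 statements merged into one kernel-verified Lean document; each statement's English description precedes it below -/
import Mathlib

section
/- Let m ≥ 2 and p ≥ 2 be integers and let θ₁, …, θ_{m−1} > 0 be real numbers. Define H : ℝᵐ → ℝ by H(u) = Σ_{0 ≤ p₁ ≤ p₂ ≤ ⋯ ≤ p_{m−1} ≤ p} C(p, p_{m−1}) C(p_{m−1}, p_{m−2}) ⋯ C(p₂, p₁) · θ₁^{p₁²} θ₂^{p₂²} ⋯ θ_{m−1}^{p_{m−1}²} · u₁^{p₁} u₂^{p₂−p₁} ⋯ u_{m−1}^{p_{m−1}−p_{m−2}} u_m^{p−p_{m−1}}, where C(a,b) denotes the binomial coefficient a!/(b!(a−b)!) and the sum ranges over all integer tuples (p₁,…,p_{m−1}) with 0 ≤ p₁ ≤ p₂ ≤ ⋯ ≤ p_{m−1} ≤ p. Then for every i ∈ {1, …, m} and every u ∈ ℝᵐ, the partial derivative of H with respect to u_i satisfies ∂H/∂u_i (u) = p · Σ_{0 ≤ p₁ ≤ ⋯ ≤ p_{m−1} ≤ p−1} C(p−1, p_{m−1}) ⋯ C(p₂, p₁) · (Π_{k=1}^{i−1}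 θ_k^{p_k²}) · (Π_{k=i}^{m−1} θ_k^{(p_k+1)²}) · u₁^{p₁} u₂^{p₂−p₁} ⋯ u_{m−1}^{p_{m−1}−p_{m−2}} u_m^{(p−1)−p_{m−1}}. -/
open Finset

namespace S1

def ext (P j : ℕ) (s : Fin (j+1) → ℕ) (c : ℕ) : ℕ :=
  if h : c ≤ j then s ⟨c, Nat.lt_succ_of_le h⟩ else P
def Ee (P j : ℕ) (s : Fin (j+1) → ℕ) (c : ℕ) : ℕ :=
  ext P j s c - (if c = 0 then 0 else ext P j s (c-1))
lemma ext_le (P j : ℕ) (s : Fin (j+1) → ℕ) {c : ℕ} (h : c ≤ j) :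
    ext P j s c = s ⟨c, Nat.lt_succ_of_le h⟩ := dif_pos h
lemma ext_gt (P j : ℕ) (s : Fin (j+1) → ℕ) {c : ℕ} (h : j < c) :
    ext P j s c = P := dif_neg (by omega)

def Phi (p j t : ℕ) (s' : Fin (j+1) → Fin p) (k : Fin (j+1)) : Fin (p+1) :=
  ⟨if (k:ℕ) < t then (s' k : ℕ) else (s' k : ℕ) + 1, by
    have := (s' k).isLt; split_ifs <;> omega⟩

lemma Phi_val (p j t : ℕ) (s' : Fin (j+1) → Fin p) (k : Fin (j+1)) :
    (Phi p j t s' k : ℕ) = if (k:ℕ) < t then (s' k : ℕ) else (s' k : ℕ) + 1 := rfl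

lemma ext_Phi (p j t : ℕ) (hp : 1 ≤ p) (s' : Fin (j+1) → Fin p) (ht : t ≤ j + 1) (c : ℕ) :
    ext p j (fun a => (Phi p j t s' a : ℕ)) c
      = if c < t then ext (p-1) j (fun a => (s' a : ℕ)) c
        else ext (p-1) j (fun a => (s' a : ℕ)) c + 1 := by
  by_cases h : c ≤ j
  · rw [ext_le _ _ _ h, ext_le _ _ _ h, Phi_val]
  · rw [ext_gt p j _ (show j < c by omega), ext_gt (p-1) j _ (show j < c by omega),
      if_neg (by omega)]
    omega

lemma ext_mono (P j : ℕ) (s : Fin (j+1) → ℕ) (hP : s (Fin.last j) ≤ P)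
    (hs : ∀ a b : Fin (j+1), a ≤ b → s a ≤ s b) : Monotone (ext P j s) := by
  apply monotone_nat_of_le_succ
  intro c
  by_cases h1 : c + 1 ≤ j
  · rw [ext_le P j s (show c ≤ j by omega), ext_le P j s h1]
    exact hs _ _ (by simp [Fin.le_def])
  · rw [ext_gt P j s (show j < c + 1 by omega)]
    by_cases h2 : c ≤ j
    · rw [ext_le P j s h2]
      exact le_trans (hs _ (Fin.last j) (by simp [Fin.le_def, Fin.last]; omega)) hP
    · rw [ext_gt P j s (show j < c by omega)]

lemma Ee_Phi (p j t : ℕ) (hp : 1 ≤ p) (s' : Fin (j+1) → Fin p)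
    (hs' : ∀ a b : Fin (j+1), a ≤ b → (s' a : ℕ) ≤ (s' b : ℕ)) (ht : t ≤ j + 1) (c : ℕ) :
    Ee p j (fun a => (Phi p j t s' a : ℕ)) c
      = Ee (p-1) j (fun a => (s' a : ℕ)) c + (if c = t then 1 else 0) := by
  have hmB : Monotone (ext (p-1) j (fun a => (s' a : ℕ))) := by
    apply ext_mono
    · have := (s' (Fin.last j)).isLt; omega
    · exact hs'
  have hm1 : ext (p-1) j (fun a => (s' a : ℕ)) (c-1) ≤ ext (p-1) j (fun a => (s' a : ℕ)) c :=
    hmB (by omega)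
  rw [Ee, Ee, ext_Phi p j t hp s' ht, ext_Phi p j t hp s' ht]
  split_ifs <;> omega


def Psi (p j t : ℕ) (hp : 0 < p) (s : Fin (j+1) → Fin (p+1)) (k : Fin (j+1)) : Fin p :=
  ⟨min (if (k:ℕ) < t then (s k : ℕ) else (s k : ℕ) - 1) (p-1), by omega⟩

lemma bounds (p j t : ℕ) (s : Fin (j+1) → Fin (p+1))
    (hs : ∀ a b : Fin (j+1), a ≤ b → (s a:ℕ) ≤ (s b:ℕ)) (ht : t ≤ j+1)
    (hq : Ee p j (fun a => (s a:ℕ)) t ≠ 0) :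
    (∀ k : Fin (j+1), (k:ℕ) < t → (s k:ℕ) < p) ∧
    (∀ k : Fin (j+1), t ≤ (k:ℕ) → 1 ≤ (s k:ℕ)) ∧
    (∀ a k : Fin (j+1), (a:ℕ) < t → t ≤ (k:ℕ) → (s a:ℕ) < (s k:ℕ)) := by
  by_cases h1 : t ≤ j
  · rw [Ee, ext_le p j _ h1] at hq
    by_cases h0 : t = 0
    · subst h0
      rw [if_pos rfl] at hq
      refine ⟨fun k hk => by omega, fun k _ => ?_, fun a k ha => by omega⟩
      have := hs ⟨0, by omega⟩ k (by rw [Fin.le_def]; simp)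
      omega
    · rw [if_neg h0, ext_le p j _ (show t-1 ≤ j by omega)] at hq
      have hlt : (s ⟨t-1, by omega⟩ : ℕ) < (s ⟨t, by omega⟩ : ℕ) := by omega
      have hub : (s ⟨t, by omega⟩ : ℕ) < p + 1 := (s _).isLt
      refine ⟨fun k hk => ?_, fun k hk => ?_, fun a k ha hk => ?_⟩
      · have := hs k ⟨t-1, by omega⟩ (by rw [Fin.le_def]; simp; omega)
        omega
      · have := hs ⟨t, by omega⟩ k (by rw [Fin.le_def]; simp; omega)
        omega
      · have h2 := hs a ⟨t-1, by omega⟩ (by rw [Fin.le_def]; simp; omega)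
        have h3 := hs ⟨t, by omega⟩ k (by rw [Fin.le_def]; simp; omega)
        omega
  · have ht' : t = j + 1 := by omega
    subst ht'
    rw [Ee, ext_gt p j _ (by omega), if_neg (by omega),
      ext_le p j _ (show j+1-1 ≤ j by omega)] at hq
    refine ⟨fun k hk => ?_, fun k hk => by have := k.isLt; omega,
      fun a k ha hk => by have := k.isLt; omega⟩
    have := hs k ⟨j+1-1, by omega⟩ (by rw [Fin.le_def]; simp; omega)
    omega

lemma Phi_mono (p j t : ℕ) (s' : Fin (j+1) → Fin p)
    (hs' : ∀ a b : Fin (j+1), a ≤ b → s' a ≤ s' b) :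
    ∀ a b : Fin (j+1), a ≤ b → Phi p j t s' a ≤ Phi p j t s' b := by
  intro a b hab
  have h1 := hs' a b hab
  rw [Fin.le_def] at h1 ⊢
  rw [Fin.le_def] at hab
  rw [Phi_val, Phi_val]
  split_ifs <;> omega

lemma Psi_mono (p j t : ℕ) (hp : 0 < p) (s : Fin (j+1) → Fin (p+1))
    (hs : ∀ a b : Fin (j+1), a ≤ b → (s a:ℕ) ≤ (s b:ℕ)) (ht : t ≤ j+1)
    (hq : Ee p j (fun a => (s a:ℕ)) t ≠ 0) :
    ∀ a b : Fin (j+1), a ≤ b → Psi p j t hp s a ≤ Psi p j t hp s b := by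
  obtain ⟨hA, hB, hC⟩ := bounds p j t s hs ht hq
  intro a b hab
  have h1 := hs a b hab
  rw [Fin.le_def] at hab ⊢
  show min _ _ ≤ min _ _
  split_ifs with g1 g2 g2
  · omega
  · have := hC a b g1 (by omega)
    omega
  · omega
  · omega

lemma Phi_Psi (p j t : ℕ) (hp : 0 < p) (s : Fin (j+1) → Fin (p+1))
    (hs : ∀ a b : Fin (j+1), a ≤ b → (s a:ℕ) ≤ (s b:ℕ)) (ht : t ≤ j+1)
    (hq : Ee p j (fun a => (s a:ℕ)) t ≠ 0) :
    Phi p j t (Psi p j t hp s) = s := by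
  obtain ⟨hA, hB, hC⟩ := bounds p j t s hs ht hq
  funext k
  apply Fin.ext
  rw [Phi_val]
  show (if (k:ℕ) < t then min _ _ else min _ _ + 1) = (s k : ℕ)
  have h1 := (s k).isLt
  split_ifs with g1
  · have := hA k g1
    omega
  · have := hB k (by omega)
    omega

lemma Psi_Phi (p j t : ℕ) (hp : 0 < p) (s' : Fin (j+1) → Fin p) :
    Psi p j t hp (Phi p j t s') = s' := by
  funext k
  apply Fin.ext
  show min (if (k:ℕ) < t then (Phi p j t s' k : ℕ) else (Phi p j t s' k : ℕ) - 1) (p-1)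
      = (s' k : ℕ)
  rw [Phi_val]
  have h1 := (s' k).isLt
  split_ifs <;> omega


lemma Ee_zero (P j : ℕ) (s : Fin (j+1) → ℕ) : Ee P j s 0 = s 0 := by
  simp [Ee, ext_le P j s (Nat.zero_le j)]

lemma Ee_middle (P j : ℕ) (s : Fin (j+1) → ℕ) (i : Fin j) :
    Ee P j s ((i:ℕ)+1) = s i.succ - s i.castSucc := by
  have h1 : (i:ℕ)+1 ≤ j := i.isLt
  have h0 : (i:ℕ) ≤ j := by omega
  rw [Ee, if_neg (by omega), Nat.add_sub_cancel, ext_le P j s h1, ext_le P j s h0]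
  congr 1

lemma Ee_last (P j : ℕ) (s : Fin (j+1) → ℕ) : Ee P j s (j+1) = P - s (Fin.last j) := by
  rw [Ee, if_neg (by omega), Nat.add_sub_cancel, ext_gt P j s (by omega), ext_le P j s le_rfl]
  rfl

lemma prod_Ee (P j : ℕ) (s : Fin (j+1) → ℕ) (u : Fin (j+2) → ℝ) :
    (u 0 ^ (s 0)) * (∏ i : Fin j, u i.succ.castSucc ^ (s i.succ - s i.castSucc)) *
      u (Fin.last (j+1)) ^ (P - s (Fin.last j))
    = ∏ k : Fin (j+2), u k ^ Ee P j s (k : ℕ) := by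
  rw [Fin.prod_univ_succ, Fin.prod_univ_castSucc]
  simp only [Fin.val_zero, Ee_zero, Fin.val_succ, Fin.coe_castSucc, Fin.succ_last,
    Fin.val_last, Ee_last, Fin.succ_castSucc]
  rw [mul_assoc]
  congr 1
  congr 1
  apply Finset.prod_congr rfl
  intro i _
  rw [Ee_middle]




lemma sub_one_choose {n a : ℕ} (h : a < n) : (n - a) * n.choose a = n * (n-1).choose a := by
  have h1 := Nat.choose_succ_right_eq n a
  have h2 := Nat.add_one_mul_choose_eq (n-1) a
  rw [show n - 1 + 1 = n by omega] at h2
  linarith [h1, h2]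

lemma chain (f : ℕ → ℕ) (t : ℕ) : ∀ n, t ≤ n →
    (f t + 1) * ∏ k ∈ Finset.Ico t n, (f (k+1) + 1).choose (f k + 1)
    = (f n + 1) * ∏ k ∈ Finset.Ico t n, (f (k+1)).choose (f k) := by
  intro n hn
  induction n, hn using Nat.le_induction with
  | base => simp
  | succ n hn ih =>
      rw [Finset.prod_Ico_succ_top hn, Finset.prod_Ico_succ_top hn]
      have h2 := Nat.add_one_mul_choose_eq (f (n+1)) (f n)
      calc (f t + 1) * ((∏ k ∈ Finset.Ico t n, (f (k+1) + 1).choose (f k + 1)) *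
              (f (n+1) + 1).choose (f n + 1))
          = ((f t + 1) * ∏ k ∈ Finset.Ico t n, (f (k+1) + 1).choose (f k + 1)) *
              (f (n+1) + 1).choose (f n + 1) := by ring
        _ = ((f n + 1) * ∏ k ∈ Finset.Ico t n, (f (k+1)).choose (f k)) *
              (f (n+1) + 1).choose (f n + 1) := by rw [ih]
        _ = (∏ k ∈ Finset.Ico t n, (f (k+1)).choose (f k)) *
              ((f (n+1) + 1).choose (f n + 1) * (f n + 1)) := by ring
        _ = (∏ k ∈ Finset.Ico t n, (f (k+1)).choose (f k)) *
              ((f (n+1) + 1) * (f (n+1)).choose (f n)) := by rw [← h2]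
        _ = (f (n+1) + 1) * ((∏ k ∈ Finset.Ico t n, (f (k+1)).choose (f k)) *
              (f (n+1)).choose (f n)) := by ring

lemma fact_head (p a : ℕ) (h : a < p) : (a + 1) * p.choose (a + 1) = p * (p-1).choose a := by
  have h2 := Nat.add_one_mul_choose_eq (p-1) a
  rw [show p - 1 + 1 = p by omega] at h2
  linarith [h2]

lemma key (p j t : ℕ) (f : ℕ → ℕ) (hmono : ∀ k, f k ≤ f (k+1)) (hfp : f j < p)
    (ht : t ≤ j + 1) :
    (((if t ≤ j then f t + 1 else p) - (if t = 0 then 0 else f (t-1))) *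
      p.choose (if t ≤ j then f j + 1 else f j)) *
      ∏ k ∈ range j, ((if k+1 < t then f (k+1) else f (k+1) + 1).choose
        (if k < t then f k else f k + 1))
    = (p * (p-1).choose (f j)) * ∏ k ∈ range j, (f (k+1)).choose (f k) := by
  have hM : Monotone f := monotone_nat_of_le_succ hmono
  by_cases h1 : t ≤ j
  · rw [if_pos h1, if_pos h1]
    by_cases h0 : t = 0
    · subst h0
      rw [if_pos rfl, Nat.sub_zero]
      have hprod : ∏ k ∈ range j, ((if k+1 < 0 then f (k+1) else f (k+1) + 1).choose
          (if k < 0 then f k else f k + 1)) = ∏ k ∈ Finset.Ico 0 j, (f (k+1) + 1).choose (f k + 1) := by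
        rw [← Finset.range_eq_Ico]
        exact Finset.prod_congr rfl fun k _ => by rw [if_neg (by omega), if_neg (by omega)]
      rw [hprod]
      have hc := chain f 0 j (Nat.zero_le j)
      have hh := fact_head p (f j) hfp
      calc ((f 0 + 1) * p.choose (f j + 1)) * ∏ k ∈ Finset.Ico 0 j, (f (k+1)+1).choose (f k + 1)
          = p.choose (f j + 1) * ((f 0 + 1) * ∏ k ∈ Finset.Ico 0 j, (f (k+1)+1).choose (f k+1)) := by
            ring
        _ = p.choose (f j + 1) * ((f j + 1) * ∏ k ∈ Finset.Ico 0 j, (f (k+1)).choose (f k)) := by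
            rw [hc]
        _ = ((f j + 1) * p.choose (f j + 1)) * ∏ k ∈ Finset.Ico 0 j, (f (k+1)).choose (f k) := by
            ring
        _ = (p * (p-1).choose (f j)) * ∏ k ∈ Finset.Ico 0 j, (f (k+1)).choose (f k) := by rw [hh]
        _ = (p * (p-1).choose (f j)) * ∏ k ∈ range j, (f (k+1)).choose (f k) := by
            rw [Finset.range_eq_Ico]
    · -- 1 ≤ t ≤ j
      rw [if_neg h0]
      have hsplit : ∀ G : ℕ → ℕ, ∏ k ∈ range j, G k
          = (∏ k ∈ Finset.Ico 0 (t-1), G k) * (G (t-1) * ∏ k ∈ Finset.Ico t j, G k) := by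
        intro G
        rw [Finset.range_eq_Ico,
          ← Finset.prod_Ico_consecutive G (by omega : 0 ≤ t-1) (by omega : t-1 ≤ j),
          Finset.prod_eq_prod_Ico_succ_bot (by omega : t-1 < j), show t-1+1 = t by omega]
      rw [hsplit, hsplit]
      have ha : ∏ k ∈ Finset.Ico 0 (t-1), ((if k+1 < t then f (k+1) else f (k+1) + 1).choose
          (if k < t then f k else f k + 1)) = ∏ k ∈ Finset.Ico 0 (t-1), (f (k+1)).choose (f k) := by
        apply Finset.prod_congr rfl
        intro k hk
        simp only [Finset.mem_Ico] at hk
        rw [if_pos (by omega), if_pos (by omega)]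
      have hb : ∏ k ∈ Finset.Ico t j, ((if k+1 < t then f (k+1) else f (k+1) + 1).choose
          (if k < t then f k else f k + 1))
          = ∏ k ∈ Finset.Ico t j, (f (k+1) + 1).choose (f k + 1) := by
        apply Finset.prod_congr rfl
        intro k hk
        simp only [Finset.mem_Ico] at hk
        rw [if_neg (by omega), if_neg (by omega)]
      have hgt : ((if (t-1)+1 < t then f ((t-1)+1) else f ((t-1)+1) + 1).choose
          (if t-1 < t then f (t-1) else f (t-1) + 1)) = (f t + 1).choose (f (t-1)) := by
        rw [if_neg (by omega), if_pos (by omega), show t-1+1 = t by omega]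
      rw [ha, hb, hgt]
      have hd : (f t + 1 - f (t-1)) * (f t + 1).choose (f (t-1))
          = (f t + 1) * (f t).choose (f (t-1)) := by
        have hle : f (t-1) ≤ f t := hM (by omega : t-1 ≤ t)
        have := sub_one_choose (n := f t + 1) (a := f (t-1)) (by omega)
        simpa using this
      have hc := chain f t j h1
      have hh := fact_head p (f j) hfp
      set A := ∏ k ∈ Finset.Ico 0 (t-1), (f (k+1)).choose (f k) with hA
      calc ((f t + 1 - f (t-1)) * p.choose (f j + 1)) *
              (A * ((f t + 1).choose (f (t-1)) * ∏ k ∈ Finset.Ico t j, (f (k+1)+1).choose (f k+1)))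
          = (p.choose (f j + 1) * A) *
              (((f t + 1 - f (t-1)) * (f t + 1).choose (f (t-1))) *
                ∏ k ∈ Finset.Ico t j, (f (k+1)+1).choose (f k+1)) := by ring
        _ = (p.choose (f j + 1) * A) *
              (((f t + 1) * (f t).choose (f (t-1))) *
                ∏ k ∈ Finset.Ico t j, (f (k+1)+1).choose (f k+1)) := by rw [hd]
        _ = (p.choose (f j + 1) * A * (f t).choose (f (t-1))) *
              ((f t + 1) * ∏ k ∈ Finset.Ico t j, (f (k+1)+1).choose (f k+1)) := by ring
        _ = (p.choose (f j + 1) * A * (f t).choose (f (t-1))) *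
              ((f j + 1) * ∏ k ∈ Finset.Ico t j, (f (k+1)).choose (f k)) := by rw [hc]
        _ = ((f j + 1) * p.choose (f j + 1)) *
              (A * ((f t).choose (f (t-1)) * ∏ k ∈ Finset.Ico t j, (f (k+1)).choose (f k))) := by
            ring
        _ = (p * (p-1).choose (f j)) *
              (A * ((f t).choose (f (t-1)) * ∏ k ∈ Finset.Ico t j, (f (k+1)).choose (f k))) := by
            rw [hh]
        _ = (p * (p-1).choose (f j)) *
              (A * ((f (t-1+1)).choose (f (t-1)) * ∏ k ∈ Finset.Ico t j, (f (k+1)).choose (f k))) := by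
            rw [show t-1+1 = t by omega]
  · -- t = j + 1
    have htj : t = j + 1 := by omega
    subst htj
    rw [if_neg h1, if_neg h1, if_neg (by omega), Nat.add_sub_cancel]
    have hprod : ∏ k ∈ range j, ((if k+1 < j+1 then f (k+1) else f (k+1) + 1).choose
        (if k < j+1 then f k else f k + 1)) = ∏ k ∈ range j, (f (k+1)).choose (f k) := by
      apply Finset.prod_congr rfl
      intro k hk
      rw [if_pos (by simp at hk; omega), if_pos (by simp at hk; omega)]
    rw [hprod]
    congr 1
    exact sub_one_choose hfp




lemma hasFDeriv_mono (n : ℕ) (e : Fin n → ℕ) (u : Fin n → ℝ) :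
    HasFDerivAt (fun v : Fin n → ℝ => ∏ k, v k ^ e k)
      (∑ k, (∏ k' ∈ Finset.univ.erase k, u k' ^ e k') •
        (((e k : ℝ) * u k ^ (e k - 1)) • ContinuousLinearMap.proj (R := ℝ)
          (φ := fun _ : Fin n => ℝ) k)) u := by
  have h : ∀ k : Fin n, HasFDerivAt (fun v : Fin n → ℝ => v k ^ e k)
      (((e k : ℝ) * u k ^ (e k - 1)) • ContinuousLinearMap.proj (R := ℝ)
        (φ := fun _ : Fin n => ℝ) k) u := fun k =>
    (hasDerivAt_pow (e k) (u k)).comp_hasFDerivAt u (hasFDerivAt_apply (𝕜 := ℝ) k u)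
  exact HasFDerivAt.finset_prod fun k _ => h k

lemma fderiv_mono_apply (n : ℕ) (e : Fin n → ℕ) (u : Fin n → ℝ) (i : Fin n) :
    (∑ k, (∏ k' ∈ Finset.univ.erase k, u k' ^ e k') •
        (((e k : ℝ) * u k ^ (e k - 1)) • ContinuousLinearMap.proj (R := ℝ)
          (φ := fun _ : Fin n => ℝ) k)) (Pi.single i 1)
      = (∏ k' ∈ Finset.univ.erase i, u k' ^ e k') * ((e i : ℝ) * u i ^ (e i - 1)) := by
  rw [ContinuousLinearMap.sum_apply]
  rw [Finset.sum_eq_single i]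
  · simp
  · intro k _ hk
    simp [Pi.single_apply, hk, (Ne.symm hk)]
  · simp


lemma coeff_id (p j : ℕ) (hp : 2 ≤ p) (t : ℕ) (ht : t ≤ j+1) (s' : Fin (j+1) → Fin p)
    (hs' : ∀ a b : Fin (j+1), a ≤ b → (s' a:ℕ) ≤ (s' b:ℕ)) :
    Ee p j (fun a => (Phi p j t s' a : ℕ)) t *
      (p.choose ((Phi p j t s' (Fin.last j) : ℕ)) *
        ∏ i' : Fin j, ((Phi p j t s' i'.succ : ℕ)).choose ((Phi p j t s' i'.castSucc : ℕ)))
    = p * ((p-1).choose ((s' (Fin.last j) : ℕ)) *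
        ∏ i' : Fin j, ((s' i'.succ : ℕ)).choose ((s' i'.castSucc : ℕ))) := by
  set f := ext (p-1) j (fun a => (s' a : ℕ)) with hf
  have hMf : Monotone f := ext_mono (p-1) j _ (by have := (s' (Fin.last j)).isLt; omega)
    (fun a b hab => hs' a b hab)
  have hval : ∀ c : ℕ, (h : c ≤ j) → f c = (s' ⟨c, Nat.lt_succ_of_le h⟩ : ℕ) :=
    fun c h => ext_le (p-1) j _ h
  have hfj : f j = (s' (Fin.last j) : ℕ) := hval j le_rfl
  have hfp : f j < p := by have := (s' (Fin.last j)).isLt; omega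
  have hg_last : (Phi p j t s' (Fin.last j) : ℕ) = if t ≤ j then f j + 1 else f j := by
    rw [Phi_val]
    simp only [Fin.val_last]
    split_ifs <;> omega
  have hprod : ∏ i' : Fin j, ((Phi p j t s' i'.succ : ℕ)).choose ((Phi p j t s' i'.castSucc : ℕ))
      = ∏ k ∈ range j, ((if k+1 < t then f (k+1) else f (k+1) + 1).choose
        (if k < t then f k else f k + 1)) := by
    rw [← Fin.prod_univ_eq_prod_range]
    apply Finset.prod_congr rfl
    intro i' _
    have h1 : f ((i':ℕ)+1) = (s' i'.succ : ℕ) := hval _ i'.isLt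
    have h2 : f (i':ℕ) = (s' i'.castSucc : ℕ) := hval _ (by omega)
    rw [Phi_val, Phi_val, h1, h2, Fin.val_succ, Fin.coe_castSucc]
  have hE : Ee p j (fun a => (Phi p j t s' a : ℕ)) t
      = (if t ≤ j then f t + 1 else p) - (if t = 0 then 0 else f (t-1)) := by
    rw [Ee, ext_Phi p j t (by omega) s' ht, ext_Phi p j t (by omega) s' ht, ← hf]
    have hjt : f (j+1) = p - 1 := ext_gt (p-1) j _ (by omega)
    by_cases h1 : t ≤ j
    · split_ifs <;> omega
    · have ht' : t = j+1 := by omega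
      subst ht'
      split_ifs <;> omega
  have hprod' : ∏ i' : Fin j, ((s' i'.succ : ℕ)).choose ((s' i'.castSucc : ℕ))
      = ∏ k ∈ range j, (f (k+1)).choose (f k) := by
    rw [← Fin.prod_univ_eq_prod_range]
    apply Finset.prod_congr rfl
    intro i' _
    rw [hval _ i'.isLt, hval (i':ℕ) (by omega)]
    rfl
  rw [hE, hg_last, hprod, hprod', ← mul_assoc, ← hfj]
  rw [key p j t f (fun k => hMf (by omega)) hfp ht]
  ring

end S1


lemma S1.assemble (pR C' CP th M0 X Y EP : ℝ) (h1 : EP * CP = pR * C') (h2 : Y * X = M0) :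
    pR * (C' * th * M0) = (CP * th) * (X * (EP * Y)) := by
  calc pR * (C' * th * M0) = (pR * C') * (th * M0) := by ring
    _ = (EP * CP) * (th * M0) := by rw [h1]
    _ = (CP * th) * (EP * M0) := by ring
    _ = (CP * th) * (EP * (Y * X)) := by rw [h2]
    _ = (CP * th) * (X * (EP * Y)) := by ring

/-- Lemma 5.1 of the paper: the partial derivatives of the homogeneous polynomial
`H` of degree `p` in `m = j + 2` variables.  The tuples `(p₁, …, p_{m-1})` with
`0 ≤ p₁ ≤ ⋯ ≤ p_{m-1} ≤ p` are encoded as monotone functions `s : Fin (j+1) → Fin (p+1)`. -/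
theorem stmt_1 (j p : ℕ) (hp : 2 ≤ p) (θ : Fin (j + 1) → ℝ) (hθ : ∀ k, 0 < θ k)
    (H : (Fin (j + 2) → ℝ) → ℝ)
    (hH : ∀ u : Fin (j + 2) → ℝ,
      H u = ∑ s ∈ Finset.univ.filter
          (fun s : Fin (j + 1) → Fin (p + 1) => ∀ a b : Fin (j + 1), a ≤ b → s a ≤ s b),
        ((p.choose (s (Fin.last j)) : ℝ) *
            ∏ i : Fin j, ((s i.succ : ℕ).choose (s i.castSucc) : ℝ)) *
          (∏ k : Fin (j + 1), θ k ^ ((s k : ℕ) ^ 2)) *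
          ((u 0 ^ (s 0 : ℕ)) *
            (∏ i : Fin j, u i.succ.castSucc ^ ((s i.succ : ℕ) - (s i.castSucc : ℕ))) *
            u (Fin.last (j + 1)) ^ (p - (s (Fin.last j) : ℕ)))) :
    ∀ (i : Fin (j + 2)) (u : Fin (j + 2) → ℝ),
      fderiv ℝ H u (Pi.single i 1) =
        (p : ℝ) * ∑ s ∈ Finset.univ.filter
            (fun s : Fin (j + 1) → Fin p => ∀ a b : Fin (j + 1), a ≤ b → s a ≤ s b),
          (((p - 1).choose (s (Fin.last j)) : ℝ) *
              ∏ i' : Fin j, ((s i'.succ : ℕ).choose (s i'.castSucc) : ℝ)) *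
            (∏ k : Fin (j + 1),
              θ k ^ (if (k : ℕ) < (i : ℕ) then (s k : ℕ) ^ 2 else ((s k : ℕ) + 1) ^ 2)) *
            ((u 0 ^ (s 0 : ℕ)) *
              (∏ i' : Fin j, u i'.succ.castSucc ^ ((s i'.succ : ℕ) - (s i'.castSucc : ℕ))) *
              u (Fin.last (j + 1)) ^ ((p - 1) - (s (Fin.last j) : ℕ))) := by
  intro i u
  classical
  have hp1 : 0 < p := by omega
  have ht : (i:ℕ) ≤ j + 1 := by have := i.isLt; omega
  -- Step 1: rewrite H with uniform monomials
  have hH2 : H = fun v : Fin (j + 2) → ℝ => ∑ s ∈ Finset.univ.filter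
      (fun s : Fin (j + 1) → Fin (p + 1) => ∀ a b : Fin (j + 1), a ≤ b → s a ≤ s b),
      (((p.choose (s (Fin.last j)) : ℝ) *
          ∏ i' : Fin j, ((s i'.succ : ℕ).choose (s i'.castSucc) : ℝ)) *
        (∏ k : Fin (j + 1), θ k ^ ((s k : ℕ) ^ 2))) *
        ∏ k : Fin (j + 2), v k ^ S1.Ee p j (fun a => (s a : ℕ)) (k : ℕ) := by
    funext v
    rw [hH v]
    exact Finset.sum_congr rfl fun s _ => by
      rw [← S1.prod_Ee p j (fun a => (s a : ℕ)) v]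
  rw [hH2]
  -- Step 2: compute the derivative
  have hder := HasFDerivAt.fun_sum (x := u)
    (u := Finset.univ.filter
      (fun s : Fin (j + 1) → Fin (p + 1) => ∀ a b : Fin (j + 1), a ≤ b → s a ≤ s b))
    (fun s _ =>
      (S1.hasFDeriv_mono (j+1+1) (fun k => S1.Ee p j (fun a => (s a : ℕ)) (k : ℕ)) u).const_mul
        (((p.choose (s (Fin.last j)) : ℝ) *
          ∏ i' : Fin j, ((s i'.succ : ℕ).choose (s i'.castSucc) : ℝ)) *
        (∏ k : Fin (j + 1), θ k ^ ((s k : ℕ) ^ 2))))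
  rw [hder.fderiv, ContinuousLinearMap.sum_apply]
  simp only [ContinuousLinearMap.smul_apply, S1.fderiv_mono_apply, smul_eq_mul]
  rw [Finset.mul_sum]
  -- Step 3: drop vanishing terms
  rw [← Finset.sum_filter_of_ne
    (p := fun s : Fin (j + 1) → Fin (p + 1) =>
      S1.Ee p j (fun a => (s a : ℕ)) ((i : ℕ)) ≠ 0)
    (fun s _ hF => by
      by_contra h0
      exact hF (by rw [h0]; simp))]
  -- Step 4: reindex
  refine (Finset.sum_nbij' (fun s' => S1.Phi p j (i:ℕ) s') (fun s => S1.Psi p j (i:ℕ) hp1 s)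
    ?_ ?_ ?_ ?_ ?_).symm
  · -- Phi maps into the filtered set
    intro s' hs'
    simp only [Finset.mem_filter, Finset.mem_univ, true_and] at hs' ⊢
    have hs'v : ∀ a b : Fin (j+1), a ≤ b → (s' a : ℕ) ≤ (s' b : ℕ) := fun a b hab => hs' a b hab
    refine ⟨S1.Phi_mono p j (i:ℕ) s' hs', ?_⟩
    rw [S1.Ee_Phi p j (i:ℕ) (by omega) s' hs'v ht, if_pos rfl]
    omega
  · -- Psi maps into the monotone set
    intro s hs
    simp only [Finset.mem_filter, Finset.mem_univ, true_and] at hs ⊢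
    obtain ⟨hmono, hq⟩ := hs
    exact S1.Psi_mono p j (i:ℕ) hp1 s (fun a b hab => hmono a b hab) ht hq
  · intro s' _
    exact S1.Psi_Phi p j (i:ℕ) hp1 s'
  · intro s hs
    simp only [Finset.mem_filter, Finset.mem_univ, true_and] at hs
    obtain ⟨hmono, hq⟩ := hs
    exact S1.Phi_Psi p j (i:ℕ) hp1 s (fun a b hab => hmono a b hab) ht hq
  · -- termwise equality
    intro s' hs'
    simp only [Finset.mem_filter, Finset.mem_univ, true_and] at hs'
    have hs'v : ∀ a b : Fin (j+1), a ≤ b → (s' a : ℕ) ≤ (s' b : ℕ) := fun a b hab => hs' a b hab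
    have hEe := S1.Ee_Phi p j (i:ℕ) (by omega) s' hs'v ht
    -- θ factor
    have hθp : (∏ k : Fin (j+1), θ k ^ ((S1.Phi p j (i:ℕ) s' k : ℕ)^2))
        = ∏ k : Fin (j+1), θ k ^ (if (k:ℕ) < (i:ℕ) then (s' k : ℕ)^2 else ((s' k : ℕ)+1)^2) := by
      refine Finset.prod_congr rfl fun k _ => ?_
      rw [S1.Phi_val]
      split_ifs <;> rfl
    -- erased product
    have hprodE : (∏ k' ∈ Finset.univ.erase i,
          u k' ^ S1.Ee p j (fun a => (S1.Phi p j (i:ℕ) s' a : ℕ)) (k' : ℕ))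
        = ∏ k' ∈ Finset.univ.erase i, u k' ^ S1.Ee (p-1) j (fun a => (s' a : ℕ)) (k' : ℕ) := by
      refine Finset.prod_congr rfl fun k' hk' => ?_
      rw [hEe (k' : ℕ), if_neg (fun hc => (Finset.mem_erase.mp hk').1 (Fin.ext hc)), add_zero]
    have hm2 : S1.Ee p j (fun a => (S1.Phi p j (i:ℕ) s' a : ℕ)) ((i:ℕ))
        = S1.Ee (p-1) j (fun a => (s' a : ℕ)) ((i:ℕ)) + 1 := by
      rw [hEe ((i:ℕ)), if_pos rfl]
    have hpow : u i ^ (S1.Ee p j (fun a => (S1.Phi p j (i:ℕ) s' a : ℕ)) ((i:ℕ)) - 1)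
        = u i ^ S1.Ee (p-1) j (fun a => (s' a : ℕ)) ((i:ℕ)) := by
      rw [hm2, Nat.add_sub_cancel]
    -- coefficient identity
    have hcoR : (S1.Ee p j (fun a => (S1.Phi p j (i:ℕ) s' a : ℕ)) ((i:ℕ)) : ℝ) *
        ((p.choose ((S1.Phi p j (i:ℕ) s' (Fin.last j) : ℕ)) : ℝ) *
          ∏ i' : Fin j, (((S1.Phi p j (i:ℕ) s' i'.succ : ℕ)).choose
            ((S1.Phi p j (i:ℕ) s' i'.castSucc : ℕ)) : ℝ))
        = (p : ℝ) * (((p-1).choose ((s' (Fin.last j) : ℕ)) : ℝ) *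
          ∏ i' : Fin j, (((s' i'.succ : ℕ)).choose ((s' i'.castSucc : ℕ)) : ℝ)) := by
      exact_mod_cast congrArg (Nat.cast : ℕ → ℝ) (S1.coeff_id p j hp (i:ℕ) ht s' hs'v)
    have hmp : u i ^ S1.Ee (p-1) j (fun a => (s' a : ℕ)) ((i:ℕ)) *
        ∏ k' ∈ Finset.univ.erase i, u k' ^ S1.Ee (p-1) j (fun a => (s' a : ℕ)) (k' : ℕ)
        = ∏ k' : Fin (j+2), u k' ^ S1.Ee (p-1) j (fun a => (s' a : ℕ)) (k' : ℕ) :=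
      Finset.mul_prod_erase Finset.univ
        (fun k' => u k' ^ S1.Ee (p-1) j (fun a => (s' a : ℕ)) (k' : ℕ)) (Finset.mem_univ i)
    beta_reduce
    rw [hθp, hprodE, hpow, S1.prod_Ee (p-1) j (fun a => (s' a : ℕ)) u]
    exact S1.assemble _ _ _ _ _ _ _ _ hcoR hmp
end

section
/- Define F : ℝ³ → ℝ³ by F(u) = (u₁ − u₁u₂u₃, u₁u₂u₃ − u₂, u₁u₂u₃ − u₃). Then for every K > 0 there exist real numbers a₁, a₂ ≥ K such that for every L ≥ 0 there exists u ∈ ℝ³₊ with a₁ F₁(u) + a₂ F₂(u) + F₃(u) > L (u₁ + u₂ + u₃ + 1). Consequently there is no K > 0 such that for every a₁, a₂ ≥ K one can find L_a ≥ 0 with a₁F₁(u) + a₂F₂(u) + F₃(u) ≤ L_a(u₁+u₂+u₃+1) for all u ∈ ℝ³₊. -/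
/-- The vector field (1.5) of the paper does not satisfy condition (1.4):
for every `K > 0` there are `a₁, a₂ ≥ K` for which no linear bound
`a₁F₁ + a₂F₂ + F₃ ≤ L(u₁+u₂+u₃+1)` holds on `ℝ³₊`. -/
theorem stmt_8 :
    (∀ K : ℝ, 0 < K → ∃ a₁ a₂ : ℝ, K ≤ a₁ ∧ K ≤ a₂ ∧
      ∀ L : ℝ, 0 ≤ L → ∃ u₁ u₂ u₃ : ℝ, 0 ≤ u₁ ∧ 0 ≤ u₂ ∧ 0 ≤ u₃ ∧
        L * (u₁ + u₂ + u₃ + 1) <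
          a₁ * (u₁ - u₁ * u₂ * u₃) + a₂ * (u₁ * u₂ * u₃ - u₂) +
            (u₁ * u₂ * u₃ - u₃)) ∧
    ¬ ∃ K : ℝ, 0 < K ∧ ∀ a₁ a₂ : ℝ, K ≤ a₁ → K ≤ a₂ →
        ∃ L : ℝ, 0 ≤ L ∧ ∀ u₁ u₂ u₃ : ℝ, 0 ≤ u₁ → 0 ≤ u₂ → 0 ≤ u₃ →
          a₁ * (u₁ - u₁ * u₂ * u₃) + a₂ * (u₁ * u₂ * u₃ - u₂) +
              (u₁ * u₂ * u₃ - u₃) ≤ L * (u₁ + u₂ + u₃ + 1) := by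
  constructor
  · intro K hK
    refine ⟨K, K + 1, le_refl K, by linarith, fun L hL => ?_⟩
    refine ⟨L + 2, L + 2, L + 2, by linarith, by linarith, by linarith, ?_⟩
    nlinarith [sq_nonneg L, mul_nonneg hL hL, mul_nonneg (mul_nonneg hL hL) hL]
  · rintro ⟨K, hK, h⟩
    obtain ⟨L, hL, hb⟩ := h K (K + 1) le_rfl (by linarith)
    have := hb (L + 2) (L + 2) (L + 2) (by linarith) (by linarith) (by linarith)
    nlinarith [sq_nonneg L, mul_nonneg (mul_nonneg hL hL) hL]
end

section
/- There exists a map F : ℝ³ → ℝ³ (namely F(u) = (u₁ − u₁u₂u₃, u₁u₂u₃ − u₂, u₁u₂u₃ − u₃)) with the following two properties: (i) there exist b₁, b₂, b₃ > 0 and L₁ ≥ 0 (one may take b = (2,1,1) and L₁ = 2) such that b₁F₁(u) + b₂F₂(u) + b₃F₃(u) ≤ L₁(u₁+u₂+u₃+1) for all u ∈ ℝ³₊; and (ii) there is no K > 0 such that for all a₁, a₂ ≥ K there exists L_a ≥ 0 with a₁F₁(u) + a₂F₂(u) + F₃(u) ≤ L_a(u₁+u₂+u₃+1) for all u ∈ ℝ³₊.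 -/
/-- There is a vector field (namely (1.5) of the paper) satisfying condition
(V_{L1}) but not condition (V_L): the implication (V_L) ⇒ (V_{L1}) cannot be
reversed. -/
theorem stmt_9 : ∃ F : (Fin 3 → ℝ) → Fin 3 → ℝ,
    (∀ u : Fin 3 → ℝ, F u =
      ![u 0 - u 0 * u 1 * u 2, u 0 * u 1 * u 2 - u 1, u 0 * u 1 * u 2 - u 2]) ∧
    (∃ b₁ b₂ b₃ L₁ : ℝ, 0 < b₁ ∧ 0 < b₂ ∧ 0 < b₃ ∧ 0 ≤ L₁ ∧
      ∀ u : Fin 3 → ℝ, (∀ i, 0 ≤ u i) →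
        b₁ * F u 0 + b₂ * F u 1 + b₃ * F u 2 ≤ L₁ * (u 0 + u 1 + u 2 + 1)) ∧
    ¬ ∃ K : ℝ, 0 < K ∧ ∀ a₁ a₂ : ℝ, K ≤ a₁ → K ≤ a₂ →
        ∃ L : ℝ, 0 ≤ L ∧ ∀ u : Fin 3 → ℝ, (∀ i, 0 ≤ u i) →
          a₁ * F u 0 + a₂ * F u 1 + F u 2 ≤ L * (u 0 + u 1 + u 2 + 1) := by
  refine ⟨fun u => ![u 0 - u 0 * u 1 * u 2, u 0 * u 1 * u 2 - u 1,
      u 0 * u 1 * u 2 - u 2], fun u => rfl, ⟨2, 1, 1, 2, by norm_num, by norm_num,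
      by norm_num, by norm_num, fun u hu => ?_⟩, ?_⟩
  · simp only [Matrix.cons_val_zero, Matrix.cons_val_one, Matrix.head_cons,
      Matrix.cons_val_two, Matrix.tail_cons]
    have h0 := hu 0; have h1 := hu 1; have h2 := hu 2
    nlinarith
  · rintro ⟨K, hK, h⟩
    obtain ⟨L, hL, hLu⟩ := h K K le_rfl le_rfl
    set t : ℝ := 3 * L + 2 with ht
    have ht2 : (2:ℝ) ≤ t := by nlinarith
    have := hLu ![t, t, t] (by
      intro i
      fin_cases i <;> simp <;> nlinarith)
    simp only [Matrix.cons_val_zero, Matrix.cons_val_one, Matrix.head_cons,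
      Matrix.cons_val_two, Matrix.tail_cons] at this
    nlinarith [sq_nonneg t, sq_nonneg L]
end
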